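/- For k ≥ 2 and a, b ∈ ℝ, the homogeneous polynomial p_{2k}(q₁,q₂) = Σ_{i=0}^{k} [∏_{j=0}^{i-1}(2k−1+2j(a−1))·∏_{j=0}^{k−1−i}(2k−1+2j(b−1))]·(k!/(i!(k−i)!(2k−1)))·q₁^{2i} q₂^{2(k−i)} satisfies the polynomial identity q₁q₂·(∂²₁₁ − ∂²₂₂)p_{2k} = (a q₁² − b q₂²)·∂²₁₂ p_{2k}. -/

import Mathlib

open MvPolynomial

/-- The coefficient of `q₁^{2i} q₂^{2(k-i)}` in the polynomial `p_{2k}`. -/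
noncomputable def coefP (k : ℕ) (a b : ℝ) (i : ℕ) : ℝ :=
  (∏ j ∈ Finset.range i, ((2*(k:ℝ) - 1) + 2*(j:ℝ)*(a - 1))) *
  (∏ j ∈ Finset.range (k - i), ((2*(k:ℝ) - 1) + 2*(j:ℝ)*(b - 1))) *
  ((Nat.factorial k : ℝ) / ((Nat.factorial i : ℝ) * (Nat.factorial (k - i) : ℝ) * (2*(k:ℝ) - 1)))

/-- The homogeneous polynomial `p_{2k}(q₁,q₂)` as a formal polynomial in two variables. -/
noncomputable def p2k (k : ℕ) (a b : ℝ) : MvPolynomial (Fin 2) ℝ :=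
  ∑ i ∈ Finset.range (k + 1), C (coefP k a b i) * X 0 ^ (2*i) * X 1 ^ (2*(k - i))

private lemma d0 (c : ℝ) (n m : ℕ) :
    pderiv (0:Fin 2) (C c * X 0 ^ (n+1) * X 1 ^ m : MvPolynomial (Fin 2) ℝ)
    = C (c * ((n:ℝ)+1)) * X 0 ^ n * X 1 ^ m := by
  simp [pderiv_mul, pderiv_X, pderiv_pow]; ring

private lemma d1 (c : ℝ) (n m : ℕ) :
    pderiv (1:Fin 2) (C c * X 0 ^ n * X 1 ^ (m+1) : MvPolynomial (Fin 2) ℝ)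
    = C (c * ((m:ℝ)+1)) * X 0 ^ n * X 1 ^ m := by
  simp [pderiv_mul, pderiv_X, pderiv_pow]; ring

private lemma dd0 (c : ℝ) (n m : ℕ) :
    X 0 * X 1 * pderiv (0:Fin 2) (pderiv (0:Fin 2) (C c * X 0 ^ (2*(n+1)) * X 1 ^ m : MvPolynomial (Fin 2) ℝ))
    = C (c * (2*(n:ℝ)+2) * (2*(n:ℝ)+1)) * X 0 ^ (2*n+1) * X 1 ^ (m+1) := by
  rw [show 2*(n+1) = (2*n+1)+1 by ring, d0, show 2*n+1 = (2*n)+1 from rfl, d0]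
  push_cast
  ring

private lemma dd1 (c : ℝ) (n m : ℕ) :
    X 0 * X 1 * pderiv (1:Fin 2) (pderiv (1:Fin 2) (C c * X 0 ^ n * X 1 ^ (2*(m+1)) : MvPolynomial (Fin 2) ℝ))
    = C (c * (2*(m:ℝ)+2) * (2*(m:ℝ)+1)) * X 0 ^ (n+1) * X 1 ^ (2*m+1) := by
  rw [show 2*(m+1) = (2*m+1)+1 by ring, d1, show 2*m+1 = (2*m)+1 from rfl, d1]
  push_cast
  ring

private lemma dd01 (c : ℝ) (n m : ℕ) :
    pderiv (0:Fin 2) (pderiv (1:Fin 2) (C c * X 0 ^ (2*(n+1)) * X 1 ^ (2*(m+1)) : MvPolynomial (Fin 2) ℝ))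
    = C (c * (2*(m:ℝ)+2) * (2*(n:ℝ)+2)) * X 0 ^ (2*n+1) * X 1 ^ (2*m+1) := by
  rw [show 2*(m+1) = (2*m+1)+1 by ring, d1, show 2*(n+1) = (2*n+1)+1 by ring, d0]
  push_cast
  ring

private lemma pdnum (i : Fin 2) : pderiv i (2 : MvPolynomial (Fin 2) ℝ) = 0 := by
  rw [show (2 : MvPolynomial (Fin 2) ℝ) = C 2 from (map_ofNat C 2).symm, pderiv_C]

private lemma core (m r : ℕ) (a b : ℝ) :
    coefP (m+1+r) a b (m+1) * ((m:ℝ)+1) * (2*(m:ℝ)+1 + 2*b*(r:ℝ))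
    = coefP (m+1+r) a b m * ((r:ℝ)+1) * (2*(m:ℝ)+1 + 2*(r:ℝ) + 2*(m:ℝ)*(a-1)) := by
  unfold coefP
  rw [show m+1+r - (m+1) = r by omega, show m+1+r - m = r+1 by omega,
    Finset.prod_range_succ, Finset.prod_range_succ]
  generalize (∏ j ∈ Finset.range m, ((2*((m+1+r:ℕ):ℝ) - 1) + 2*(j:ℝ)*(a - 1))) = P
  generalize (∏ j ∈ Finset.range r, ((2*((m+1+r:ℕ):ℝ) - 1) + 2*(j:ℝ)*(b - 1))) = Q
  have hm : ((Nat.factorial m : ℝ)) ≠ 0 := Nat.cast_ne_zero.mpr (Nat.factorial_ne_zero m)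
  have hr : ((Nat.factorial r : ℝ)) ≠ 0 := Nat.cast_ne_zero.mpr (Nat.factorial_ne_zero r)
  have h2k : (2*((m+1+r : ℕ):ℝ) - 1) ≠ 0 := by
    push_cast; nlinarith [Nat.cast_nonneg (α := ℝ) m, Nat.cast_nonneg (α := ℝ) r]
  push_cast [Nat.factorial_succ] at *
  field_simp
  ring

theorem stmt_8 (k : ℕ) (hk : 2 ≤ k) (a b : ℝ) :
    X 0 * X 1 * (pderiv 0 (pderiv 0 (p2k k a b)) - pderiv 1 (pderiv 1 (p2k k a b)))
    = (C a * X 0 ^ 2 - C b * X 1 ^ 2) * pderiv 0 (pderiv 1 (p2k k a b)) := by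
  have h1 : X 0 * X 1 * pderiv (0:Fin 2) (pderiv (0:Fin 2) (p2k k a b))
      = ∑ m ∈ Finset.range k,
        C (coefP k a b (m+1) * (2*(m:ℝ)+2) * (2*(m:ℝ)+1)) * X 0 ^ (2*m+1) * X 1 ^ (2*(k-m-1)+1) := by
    simp only [p2k, map_sum, Finset.mul_sum]
    rw [Finset.sum_range_succ']
    have hz : X 0 * X 1 * pderiv (0:Fin 2) (pderiv (0:Fin 2)
        (C (coefP k a b 0) * X 0 ^ (2*0) * X 1 ^ (2*(k-0)) : MvPolynomial (Fin 2) ℝ)) = 0 := by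
      simp [pderiv_mul, pderiv_X, pderiv_pow]
    rw [hz, add_zero]
    refine Finset.sum_congr rfl fun i hi => ?_
    rw [show k - (i+1) = k-i-1 by omega]
    exact dd0 (coefP k a b (i+1)) i (2*(k-i-1))
  have h2 : X 0 * X 1 * pderiv (1:Fin 2) (pderiv (1:Fin 2) (p2k k a b))
      = ∑ m ∈ Finset.range k,
        C (coefP k a b m * (2*((k-m-1:ℕ):ℝ)+2) * (2*((k-m-1:ℕ):ℝ)+1)) * X 0 ^ (2*m+1) * X 1 ^ (2*(k-m-1)+1) := by
    simp only [p2k, map_sum, Finset.mul_sum]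
    rw [Finset.sum_range_succ]
    have hz : X 0 * X 1 * pderiv (1:Fin 2) (pderiv (1:Fin 2)
        (C (coefP k a b k) * X 0 ^ (2*k) * X 1 ^ (2*(k-k)) : MvPolynomial (Fin 2) ℝ)) = 0 := by
      simp [Nat.sub_self, pderiv_mul, pderiv_X, pderiv_pow]
    rw [hz, add_zero]
    refine Finset.sum_congr rfl fun i hi => ?_
    have hik : i < k := Finset.mem_range.mp hi
    rw [show 2*(k-i) = 2*((k-i-1)+1) by omega]
    exact dd1 (coefP k a b i) (2*i) (k-i-1)
  have h3 : C a * X 0 ^ 2 * pderiv (0:Fin 2) (pderiv (1:Fin 2) (p2k k a b))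
      = ∑ m ∈ Finset.range k,
        C (a * coefP k a b m * (2*(m:ℝ)) * (2*((k-m-1:ℕ):ℝ)+2)) * X 0 ^ (2*m+1) * X 1 ^ (2*(k-m-1)+1) := by
    simp only [p2k, map_sum, Finset.mul_sum]
    rw [Finset.sum_range_succ]
    have hz : C a * X 0 ^ 2 * pderiv (0:Fin 2) (pderiv (1:Fin 2)
        (C (coefP k a b k) * X 0 ^ (2*k) * X 1 ^ (2*(k-k)) : MvPolynomial (Fin 2) ℝ)) = 0 := by
      simp [Nat.sub_self, pderiv_mul, pderiv_X, pderiv_pow]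
    rw [hz, add_zero]
    refine Finset.sum_congr rfl fun i hi => ?_
    have hik : i < k := Finset.mem_range.mp hi
    rw [show 2*(k-i) = 2*((k-i-1)+1) by omega]
    rcases i with _ | j
    · simp [pderiv_mul, pderiv_X, pderiv_pow, pdnum]
    · rw [dd01 (coefP k a b (j+1)) j (k-(j+1)-1)]
      push_cast
      simp only [map_mul, map_add, map_ofNat, map_one]
      ring
  have h4 : C b * X 1 ^ 2 * pderiv (0:Fin 2) (pderiv (1:Fin 2) (p2k k a b))
      = ∑ m ∈ Finset.range k,
        C (b * coefP k a b (m+1) * (2*(m:ℝ)+2) * (2*((k-m-1:ℕ):ℝ))) * X 0 ^ (2*m+1) * X 1 ^ (2*(k-m-1)+1) := by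
    simp only [p2k, map_sum, Finset.mul_sum]
    rw [Finset.sum_range_succ']
    have hz : C b * X 1 ^ 2 * pderiv (0:Fin 2) (pderiv (1:Fin 2)
        (C (coefP k a b 0) * X 0 ^ (2*0) * X 1 ^ (2*(k-0)) : MvPolynomial (Fin 2) ℝ)) = 0 := by
      simp [pderiv_mul, pderiv_X, pderiv_pow, pdnum]
    rw [hz, add_zero]
    refine Finset.sum_congr rfl fun i hi => ?_
    rw [show k - (i+1) = k-i-1 by omega]
    rcases h0 : k - i - 1 with _ | s
    · simp [pderiv_mul, pderiv_X, pderiv_pow, pdnum]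
    · rw [show 2*(s+1) = 2*(s+1) from rfl, dd01 (coefP k a b (i+1)) i s]
      push_cast
      simp only [map_mul, map_add, map_ofNat, map_one]
      ring
  rw [mul_sub, sub_mul, h1, h2, h3, h4, ← Finset.sum_sub_distrib, ← Finset.sum_sub_distrib]
  refine Finset.sum_congr rfl fun m hm => ?_
  have hmk : m < k := Finset.mem_range.mp hm
  obtain ⟨r, hkr⟩ : ∃ r, k = m+1+r := ⟨k-m-1, by omega⟩
  rw [show k-m-1 = r by omega]
  subst hkr
  have key : (C (coefP (m+1+r) a b (m+1) * (2*(m:ℝ)+2) * (2*(m:ℝ)+1)) : MvPolynomial (Fin 2) ℝ)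
      - C (coefP (m+1+r) a b m * (2*(r:ℝ)+2) * (2*(r:ℝ)+1))
      = C (a * coefP (m+1+r) a b m * (2*(m:ℝ)) * (2*(r:ℝ)+2))
      - C (b * coefP (m+1+r) a b (m+1) * (2*(m:ℝ)+2) * (2*(r:ℝ))) := by
    rw [← map_sub, ← map_sub]
    exact congrArg C (by linear_combination (2:ℝ) * core m r a b)
  linear_combination key * (X 0 ^ (2*m+1) * X 1 ^ (2*r+1))
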